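/- Lemma 6: Let X_n = (Y_n, Z_n) take values in S = Y × (0,∞), where (Z_n) is i.i.d., Z_{n+1} is independent of (Y_1,Z_1,...,Y_n,Z_n,Y_{n+1}) for all n ≥ 0, and the predictive distributions satisfy P(Y_{n+1} ∈ B | G_n) = (α P(Y_1 ∈ B) + Σ_{i=1}^n Z_i I_B(Y_i)) / (α + Σ_{i=1}^n Z_i) a.s. for some constant α > 0 and all measurable B. Then the sequence X = (X_1, X_2, ...) is conditionally identically distributed (c.i.d.). -/

import Mathlib

open MeasureTheory Filter Set

/-- The σ-field generated by the first `n` coordinates. -/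
noncomputable def cylG (S : Type*) [MeasurableSpace S] (n : ℕ) : MeasurableSpace (ℕ → S) :=
  MeasurableSpace.comap (fun ω (i : Fin n) => ω i) inferInstance

/-- Empirical frequency of `B` among the first `n` observations. -/
noncomputable def empMeas {S : Type*} (n : ℕ) (B : Set S) (ω : ℕ → S) : ℝ :=
  (n : ℝ)⁻¹ * ∑ i ∈ Finset.range n, B.indicator (fun _ => (1 : ℝ)) (ω i)

/-- The predictive probability `a_n(B) = P(X_{n+1} ∈ B ∣ G_n)` (0-indexed). -/
noncomputable def predProb {S : Type*} [MeasurableSpace S] (P : Measure (ℕ → S))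
    (n : ℕ) (B : Set S) : (ℕ → S) → ℝ :=
  P[fun ω => B.indicator (fun _ => (1 : ℝ)) (ω n) | cylG S n]

/-- The coordinate sequence is conditionally identically distributed under `P`. -/
def CID {S : Type*} [MeasurableSpace S] (P : Measure (ℕ → S)) : Prop :=
  ∀ B : Set S, MeasurableSet B → ∀ n k : ℕ, n < k →
    (P[fun ω => B.indicator (fun _ => (1 : ℝ)) (ω k) | cylG S n])
      =ᵐ[P] P[fun ω => B.indicator (fun _ => (1 : ℝ)) (ω n) | cylG S n]

/-- `W_n(B) = √n (μ_n(B) - μ(B))`, given the limit random measure `μ` (as `μlim`). -/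
noncomputable def Wn {S : Type*} (μlim : Set S → (ℕ → S) → ℝ) (n : ℕ) (B : Set S)
    (ω : ℕ → S) : ℝ :=
  Real.sqrt n * (empMeas n B ω - μlim B ω)

/-- `D` is countably determined: some countable `D₀ ⊆ D` realizes the same sup-distance
between any two probability laws on `S`. -/
def CountablyDetermined {S : Type*} [MeasurableSpace S] (D : Set (Set S)) : Prop :=
  (∀ B ∈ D, MeasurableSet B) ∧
  ∃ D0 ⊆ D, D0.Countable ∧ ∀ ν1 ν2 : Measure S, IsProbabilityMeasure ν1 →
    IsProbabilityMeasure ν2 →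
    (⨆ B : D0, |(ν1 B).toReal - (ν2 B).toReal|) = ⨆ B : D, |(ν1 B).toReal - (ν2 B).toReal|


section Aux
set_option linter.unusedSectionVars false
set_option linter.unusedVariables false

lemma cylG_le (S : Type*) [MeasurableSpace S] (n : ℕ) :
    cylG S n ≤ (inferInstance : MeasurableSpace (ℕ → S)) :=
  Measurable.comap_le (measurable_pi_lambda (fun (ω : ℕ → S) (i : Fin n) => ω (i : ℕ))
    (fun i => measurable_pi_apply (i : ℕ)))

lemma cylG_mono (S : Type*) [MeasurableSpace S] {n k : ℕ} (h : n ≤ k) :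
    cylG S n ≤ cylG S k := by
  intro s hs
  obtain ⟨t, ht, rfl⟩ := hs
  refine ⟨(fun v : Fin k → S => fun i : Fin n => v (Fin.castLE h i)) ⁻¹' t,
    (measurable_pi_lambda _ (fun i => measurable_pi_apply _)) ht, ?_⟩
  rfl

lemma measurable_R (S : Type*) [MeasurableSpace S] (n : ℕ) :
    Measurable (fun ω : ℕ → S => fun i : Fin n => ω i) :=
  measurable_pi_lambda _ (fun i => measurable_pi_apply (i : ℕ))

lemma integrable_of_bdd {Ω : Type*} [MeasurableSpace Ω] {P : Measure Ω} [IsFiniteMeasure P]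
    {f : Ω → ℝ} {C : ℝ} (hf : Measurable f) (h : ∀ x, |f x| ≤ C) : Integrable f P :=
  ⟨hf.aestronglyMeasurable, HasFiniteIntegral.of_bounded (C := C) (Filter.Eventually.of_forall h)⟩

/-- `P(Y₁ ∈ B)` as a real number. -/
noncomputable def pB {𝒴 : Type*} [MeasurableSpace 𝒴] (P : Measure (ℕ → 𝒴 × ℝ)) (B : Set 𝒴) : ℝ :=
  (P {ω' | (ω' 0).1 ∈ B}).toReal

/-- Unclamped predictive formula. -/
noncomputable def fU {𝒴 : Type*} [MeasurableSpace 𝒴] (P : Measure (ℕ → 𝒴 × ℝ)) (α : ℝ)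
    (B : Set 𝒴) (n : ℕ) (ω : ℕ → 𝒴 × ℝ) : ℝ :=
  (α * pB P B + ∑ i ∈ Finset.range n, (ω i).2 * B.indicator (fun _ => (1 : ℝ)) ((ω i).1))
    / (α + ∑ i ∈ Finset.range n, (ω i).2)

/-- Clamped predictive formula. -/
noncomputable def fC {𝒴 : Type*} [MeasurableSpace 𝒴] (P : Measure (ℕ → 𝒴 × ℝ)) (α : ℝ)
    (B : Set 𝒴) (n : ℕ) (ω : ℕ → 𝒴 × ℝ) : ℝ :=
  (α * pB P B + ∑ i ∈ Finset.range n, max (ω i).2 0 * B.indicator (fun _ => (1 : ℝ)) ((ω i).1))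
    / (α + ∑ i ∈ Finset.range n, max (ω i).2 0)

lemma indicator_abs_le_one {𝒴 : Type*} (B : Set 𝒴) (y : 𝒴) :
    |B.indicator (fun _ => (1 : ℝ)) y| ≤ 1 := by
  by_cases h : y ∈ B <;> simp [Set.indicator_apply, h]

lemma indicator_nonneg' {𝒴 : Type*} (B : Set 𝒴) (y : 𝒴) :
    0 ≤ B.indicator (fun _ => (1 : ℝ)) y := by
  by_cases h : y ∈ B <;> simp [Set.indicator_apply, h]

lemma indicator_le_one' {𝒴 : Type*} (B : Set 𝒴) (y : 𝒴) :
    B.indicator (fun _ => (1 : ℝ)) y ≤ 1 := by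
  by_cases h : y ∈ B <;> simp [Set.indicator_apply, h]

lemma measurable_indY {𝒴 : Type*} [MeasurableSpace 𝒴] {B : Set 𝒴} (hB : MeasurableSet B) (n : ℕ) :
    Measurable (fun ω : ℕ → 𝒴 × ℝ => B.indicator (fun _ => (1 : ℝ)) ((ω n).1)) :=
  (measurable_const.indicator hB).comp (measurable_fst.comp (measurable_pi_apply n))

lemma pB_nonneg {𝒴 : Type*} [MeasurableSpace 𝒴] (P : Measure (ℕ → 𝒴 × ℝ)) (B : Set 𝒴) :
    0 ≤ pB P B := ENNReal.toReal_nonneg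

lemma pB_le_one {𝒴 : Type*} [MeasurableSpace 𝒴] (P : Measure (ℕ → 𝒴 × ℝ))
    [IsProbabilityMeasure P] (B : Set 𝒴) : pB P B ≤ 1 := by
  have := prob_le_one (μ := P) (s := {ω' | (ω' 0).1 ∈ B})
  simpa [pB] using ENNReal.toReal_mono (by simp) this

lemma integral_indY {𝒴 : Type*} [MeasurableSpace 𝒴] (P : Measure (ℕ → 𝒴 × ℝ))
    [IsProbabilityMeasure P] {B : Set 𝒴} (hB : MeasurableSet B) :
    ∫ ω, B.indicator (fun _ => (1 : ℝ)) ((ω 0).1) ∂P = pB P B := by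
  have hpre : MeasurableSet {ω' : ℕ → 𝒴 × ℝ | (ω' 0).1 ∈ B} :=
    (measurable_fst.comp (measurable_pi_apply 0)) hB
  have : (fun ω : ℕ → 𝒴 × ℝ => B.indicator (fun _ => (1 : ℝ)) ((ω 0).1))
      = fun ω => ({ω' : ℕ → 𝒴 × ℝ | (ω' 0).1 ∈ B}).indicator (fun _ => (1 : ℝ)) ω := by
    funext ω
    by_cases h : (ω 0).1 ∈ B <;> simp [Set.indicator_apply, h]
  rw [this, integral_indicator_const (1 : ℝ) hpre]
  simp [pB, Measure.real]

/-- Weighted representation of the predictive distribution via set integrals. -/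
lemma rep {𝒴 : Type*} [MeasurableSpace 𝒴] (P : Measure (ℕ → 𝒴 × ℝ)) [IsProbabilityMeasure P]
    {α : ℝ} (hα : 0 < α) {B : Set 𝒴} (hB : MeasurableSet B)
    (hpred : ∀ B : Set 𝒴, MeasurableSet B → ∀ n : ℕ, 1 ≤ n →
      (P[fun ω => B.indicator (fun _ => (1 : ℝ)) ((ω n).1) | cylG (𝒴 × ℝ) n])
        =ᵐ[P] fun ω =>
          (α * (P {ω' | (ω' 0).1 ∈ B}).toReal
            + ∑ i ∈ Finset.range n, (ω i).2 * B.indicator (fun _ => (1 : ℝ)) ((ω i).1))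
          / (α + ∑ i ∈ Finset.range n, (ω i).2))
    (n : ℕ) {g : (Fin n → 𝒴 × ℝ) → ℝ} (hg : Measurable g) (C : ℝ) (hgb : ∀ v, |g v| ≤ C)
    {A₀ : Set (Fin n → 𝒴 × ℝ)} (hA₀ : MeasurableSet A₀) :
    ∫ ω in (fun ω (i : Fin n) => ω i) ⁻¹' A₀,
        g (fun i : Fin n => ω i) * B.indicator (fun _ => (1 : ℝ)) ((ω n).1) ∂P
      = ∫ ω in (fun ω (i : Fin n) => ω i) ⁻¹' A₀, g (fun i : Fin n => ω i) * fU P α B n ω ∂P := by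
  rcases Nat.eq_zero_or_pos n with hn | hn
  · subst hn
    -- the weight is constant and the σ-field is trivial
    have hgconst : ∀ ω : ℕ → 𝒴 × ℝ, g (fun i : Fin 0 => ω i) = g (fun i => i.elim0) := by
      intro ω; exact congrArg g (Subsingleton.elim _ _)
    have hfU : ∀ ω : ℕ → 𝒴 × ℝ, fU P α B 0 ω = pB P B := by
      intro ω; simp [fU, pB]; field_simp
    rcases A₀.eq_empty_or_nonempty with rfl | ⟨v, hv⟩
    · simp
    · have hA₀univ : A₀ = Set.univ := by
        refine Set.eq_univ_of_forall fun w => ?_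
        rwa [Subsingleton.elim w v]
      subst hA₀univ
      simp only [Set.preimage_univ, Measure.restrict_univ]
      calc ∫ ω, g (fun i : Fin 0 => ω i) * B.indicator (fun _ => (1 : ℝ)) ((ω 0).1) ∂P
          = ∫ ω, g (fun i => Fin.elim0 i) * B.indicator (fun _ => (1 : ℝ)) ((ω 0).1) ∂P := by
            refine integral_congr_ae (Filter.Eventually.of_forall fun ω => ?_)
            simp only [hgconst]
        _ = g (fun i => Fin.elim0 i) * ∫ ω, B.indicator (fun _ => (1 : ℝ)) ((ω 0).1) ∂P :=
            integral_const_mul _ _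
        _ = g (fun i => Fin.elim0 i) * pB P B := by rw [integral_indY P hB]
        _ = ∫ ω, g (fun i => Fin.elim0 i) * pB P B ∂P := by
            rw [integral_const]; simp
        _ = ∫ ω, g (fun i : Fin 0 => ω i) * fU P α B 0 ω ∂P := by
            refine integral_congr_ae (Filter.Eventually.of_forall fun ω => ?_)
            simp only [hgconst, hfU]
  · -- n ≥ 1 : use the predictive hypothesis
    have hm : cylG (𝒴 × ℝ) n ≤ (inferInstance : MeasurableSpace (ℕ → 𝒴 × ℝ)) := cylG_le _ n
    haveI : SigmaFinite (P.trim hm) := inferInstance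
    set h : (ℕ → 𝒴 × ℝ) → ℝ := fun ω => g (fun i : Fin n => ω i) with hh
    have hhsm : StronglyMeasurable[cylG (𝒴 × ℝ) n] h := by
      refine Measurable.stronglyMeasurable ?_
      intro s hs
      exact ⟨g ⁻¹' s, hg hs, rfl⟩
    have hhb : ∀ ω, |h ω| ≤ C := fun ω => hgb _
    have hind : Integrable (fun ω : ℕ → 𝒴 × ℝ => B.indicator (fun _ => (1 : ℝ)) ((ω n).1)) P :=
      integrable_of_bdd (measurable_indY hB n) (fun ω => indicator_abs_le_one B _)
    have hmul := condExp_stronglyMeasurable_mul_of_bound hm hhsm hind C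
      (Filter.Eventually.of_forall hhb)
    have hprodint : Integrable
        (h * fun ω : ℕ → 𝒴 × ℝ => B.indicator (fun _ => (1 : ℝ)) ((ω n).1)) P := by
      refine integrable_of_bdd (C := |C| * 1) ?_ ?_
      · exact (hg.comp (measurable_R (𝒴 × ℝ) n)).mul (measurable_indY hB n)
      · intro ω
        simp only [Pi.mul_apply, abs_mul]
        exact mul_le_mul ((hgb _).trans (le_abs_self C)) (indicator_abs_le_one B _)
          (abs_nonneg _) (abs_nonneg _)
    have hAm : MeasurableSet[cylG (𝒴 × ℝ) n] ((fun ω (i : Fin n) => ω i) ⁻¹' A₀) :=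
      ⟨A₀, hA₀, rfl⟩
    have step1 : ∫ ω in (fun ω (i : Fin n) => ω i) ⁻¹' A₀,
        h ω * B.indicator (fun _ => (1 : ℝ)) ((ω n).1) ∂P
        = ∫ ω in (fun ω (i : Fin n) => ω i) ⁻¹' A₀,
            (P[h * fun ω : ℕ → 𝒴 × ℝ => B.indicator (fun _ => (1 : ℝ)) ((ω n).1)
              | cylG (𝒴 × ℝ) n]) ω ∂P :=
      (setIntegral_condExp hm hprodint hAm).symm
    rw [step1]
    refine setIntegral_congr_ae (hm _ hAm) ?_
    filter_upwards [hmul, hpred B hB n hn] with ω h1 h2 _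
    rw [h1]
    simp only [Pi.mul_apply]
    rw [h2]
    rfl

section weights

noncomputable def uu (ν : Measure ℝ) (a c : ℝ) : ℝ := ∫ z, (a + max z 0) / (c + max z 0) ∂ν
noncomputable def ww (ν : Measure ℝ) (a c : ℝ) : ℝ := ∫ z, a / (c + max z 0) ∂ν

variable {ν : Measure ℝ} [IsProbabilityMeasure ν] {a c : ℝ}

lemma intg_uu (hc : 0 < c) : Integrable (fun z => (a + max z 0) / (c + max z 0)) ν := by
  refine integrable_of_bdd (C := |a| / c + 1) ?_ ?_
  · exact (measurable_const.add (measurable_id.max measurable_const)).div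
      (measurable_const.add (measurable_id.max measurable_const))
  · intro z
    have hm : (0 : ℝ) ≤ max z 0 := le_max_right _ _
    have hden : 0 < c + max z 0 := by linarith
    rw [abs_div, abs_of_pos hden, div_le_iff₀ hden]
    have h1 : |a + max z 0| ≤ |a| + max z 0 := (abs_add_le _ _).trans (by rw [abs_of_nonneg hm])
    have h2 : |a| / c * c ≤ |a| / c * (c + max z 0) := by
      have : (0:ℝ) ≤ |a| / c := div_nonneg (abs_nonneg a) hc.le
      nlinarith
    have h3 : |a| / c * c = |a| := by field_simp
    nlinarith [div_nonneg (abs_nonneg a) hc.le]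

lemma intg_ww (hc : 0 < c) : Integrable (fun z => a / (c + max z 0)) ν := by
  refine integrable_of_bdd (C := |a| / c) ?_ ?_
  · exact measurable_const.div (measurable_const.add (measurable_id.max measurable_const))
  · intro z
    have hm : (0 : ℝ) ≤ max z 0 := le_max_right _ _
    have hden : 0 < c + max z 0 := by linarith
    rw [abs_div, abs_of_pos hden, div_le_div_iff₀ hden hc]
    nlinarith [abs_nonneg a]

lemma uu_nonneg (ha : 0 ≤ a) (hc : 0 < c) : 0 ≤ uu ν a c :=
  integral_nonneg fun z => div_nonneg (by have := le_max_right z 0; linarith)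
    (by have := le_max_right z 0; linarith)

lemma uu_le_one (ha : 0 ≤ a) (hac : a ≤ c) (hc : 0 < c) : uu ν a c ≤ 1 := by
  have : uu ν a c ≤ ∫ _z, (1 : ℝ) ∂ν := by
    refine integral_mono (intg_uu hc) (integrable_const 1) fun z => ?_
    have hm : (0 : ℝ) ≤ max z 0 := le_max_right _ _
    have hden : 0 < c + max z 0 := by linarith
    rw [div_le_one hden]; linarith
  simpa using this

lemma ww_nonneg (ha : 0 ≤ a) (hc : 0 < c) : 0 ≤ ww ν a c :=
  integral_nonneg fun z => div_nonneg ha (by have := le_max_right z 0; linarith)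

lemma ww_le_one (ha : 0 ≤ a) (hac : a ≤ c) (hc : 0 < c) : ww ν a c ≤ 1 := by
  have : ww ν a c ≤ ∫ _z, (1 : ℝ) ∂ν := by
    refine integral_mono (intg_ww hc) (integrable_const 1) fun z => ?_
    have hm : (0 : ℝ) ≤ max z 0 := le_max_right _ _
    have hden : 0 < c + max z 0 := by linarith
    rw [div_le_one hden]; linarith
  simpa using this

/-- The key algebraic identity behind the urn computation. -/
lemma key_id (ha : 0 ≤ a) (hc : 0 < c) :
    (uu ν a c - ww ν a c) * (a / c) + ww ν a c = a / c := by
  have key : (a / c) * uu ν a c + (1 - a / c) * ww ν a c = a / c := by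
    have h1 : (a / c) * uu ν a c = ∫ z, (a / c) * ((a + max z 0) / (c + max z 0)) ∂ν := by
      rw [uu, ← integral_const_mul]
    have h2 : (1 - a / c) * ww ν a c = ∫ z, (1 - a / c) * (a / (c + max z 0)) ∂ν := by
      rw [ww, ← integral_const_mul]
    rw [h1, h2, ← integral_add ((intg_uu hc).const_mul _) ((intg_ww hc).const_mul _)]
    have : ∀ z : ℝ, (a / c) * ((a + max z 0) / (c + max z 0))
        + (1 - a / c) * (a / (c + max z 0)) = a / c := by
      intro z
      have hm : (0 : ℝ) ≤ max z 0 := le_max_right _ _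
      have hden : 0 < c + max z 0 := by linarith
      field_simp
      ring
    simp only [this]
    simp
  nlinarith [key]

end weights

section acdefs
variable {𝒴 : Type*} [MeasurableSpace 𝒴]

noncomputable def aaF (P : Measure (ℕ → 𝒴 × ℝ)) (α : ℝ) (B : Set 𝒴) {n : ℕ}
    (v : Fin n → 𝒴 × ℝ) : ℝ :=
  α * pB P B + ∑ i, max (v i).2 0 * B.indicator (fun _ => (1 : ℝ)) ((v i).1)

noncomputable def ccF (α : ℝ) {n : ℕ} (v : Fin n → 𝒴 × ℝ) : ℝ := α + ∑ i, max (v i).2 0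

variable {P : Measure (ℕ → 𝒴 × ℝ)} {α : ℝ} {B : Set 𝒴} {n : ℕ}

lemma ccF_pos (hα : 0 < α) (v : Fin n → 𝒴 × ℝ) : 0 < ccF α v :=
  add_pos_of_pos_of_nonneg hα (Finset.sum_nonneg fun i _ => le_max_right _ _)

lemma aaF_nonneg [IsProbabilityMeasure P] (hα : 0 < α) (v : Fin n → 𝒴 × ℝ) : 0 ≤ aaF P α B v :=
  add_nonneg (mul_nonneg hα.le (pB_nonneg P B))
    (Finset.sum_nonneg fun i _ => mul_nonneg (le_max_right _ _) (indicator_nonneg' _ _))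

lemma aaF_le_ccF [IsProbabilityMeasure P] (hα : 0 < α) (v : Fin n → 𝒴 × ℝ) :
    aaF P α B v ≤ ccF α v := by
  refine add_le_add (mul_le_of_le_one_right hα.le (pB_le_one P B))
    (Finset.sum_le_sum fun i _ => ?_)
  exact mul_le_of_le_one_right (le_max_right _ _) (indicator_le_one' _ _)

lemma measurable_aaF (hB : MeasurableSet B) : Measurable (aaF P α B (n := n)) := by
  refine measurable_const.add (Finset.measurable_sum _ fun i _ => ?_)
  exact ((measurable_snd.comp (measurable_pi_apply i)).max measurable_const).mul
    ((measurable_const.indicator hB).comp (measurable_fst.comp (measurable_pi_apply i)))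

lemma measurable_ccF : Measurable (ccF α (n := n) (𝒴 := 𝒴)) :=
  measurable_const.add (Finset.measurable_sum _ fun i _ =>
    (measurable_snd.comp (measurable_pi_apply i)).max measurable_const)

lemma fC_eq (ω : ℕ → 𝒴 × ℝ) :
    fC P α B n ω = aaF P α B (fun i : Fin n => ω i) / ccF α (fun i : Fin n => ω i) := by
  simp [fC, aaF, ccF, Finset.sum_range]

lemma fC_succ_eq (ω : ℕ → 𝒴 × ℝ) :
    fC P α B (n + 1) ω
      = (aaF P α B (fun i : Fin n => ω i) + max (ω n).2 0 * B.indicator (fun _ => (1 : ℝ)) ((ω n).1))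
        / (ccF α (fun i : Fin n => ω i) + max (ω n).2 0) := by
  simp only [fC, aaF, ccF, Finset.sum_range_succ, Finset.sum_range]
  rw [add_assoc, add_assoc]

end acdefs

lemma fU_eq_fC {𝒴 : Type*} [MeasurableSpace 𝒴] {P : Measure (ℕ → 𝒴 × ℝ)} {α : ℝ} {B : Set 𝒴}
    {n : ℕ} {ω : ℕ → 𝒴 × ℝ} (h : ∀ i, 0 < (ω i).2) : fU P α B n ω = fC P α B n ω := by
  have h1 : ∀ i ∈ Finset.range n, (ω i).2 * B.indicator (fun _ => (1 : ℝ)) ((ω i).1)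
      = max (ω i).2 0 * B.indicator (fun _ => (1 : ℝ)) ((ω i).1) := fun i _ => by
    rw [max_eq_left (h i).le]
  have h2 : ∀ i ∈ Finset.range n, (ω i).2 = max (ω i).2 0 := fun i _ => by
    rw [max_eq_left (h i).le]
  rw [fU, fC, Finset.sum_congr rfl h1, Finset.sum_congr rfl h2]

/-- The crux integral identity: `∫_A fC (n+1) = ∫_A fC n` for `A ∈ 𝒢ₙ`. -/
lemma crux {𝒴 : Type*} [MeasurableSpace 𝒴] (P : Measure (ℕ → 𝒴 × ℝ)) [IsProbabilityMeasure P]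
    {α : ℝ} (hα : 0 < α) {B : Set 𝒴} (hB : MeasurableSet B)
    (hpos : ∀ᵐ ω ∂P, ∀ n, 0 < (ω n).2)
    (hindep : ∀ n : ℕ, ProbabilityTheory.Indep
      (MeasurableSpace.comap (fun ω => (ω n).2) inferInstance)
      (MeasurableSpace.comap
        (fun ω => ((fun i : Fin n => ω i), (ω n).1)) inferInstance) P)
    (hid : ∀ n : ℕ, P.map (fun ω => (ω n).2) = P.map (fun ω => (ω 0).2))
    (hpred : ∀ B : Set 𝒴, MeasurableSet B → ∀ n : ℕ, 1 ≤ n →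
      (P[fun ω => B.indicator (fun _ => (1 : ℝ)) ((ω n).1) | cylG (𝒴 × ℝ) n])
        =ᵐ[P] fun ω =>
          (α * (P {ω' | (ω' 0).1 ∈ B}).toReal
            + ∑ i ∈ Finset.range n, (ω i).2 * B.indicator (fun _ => (1 : ℝ)) ((ω i).1))
          / (α + ∑ i ∈ Finset.range n, (ω i).2))
    (n : ℕ) {A₀ : Set (Fin n → 𝒴 × ℝ)} (hA₀ : MeasurableSet A₀) :
    ∫ ω in (fun ω (i : Fin n) => ω i) ⁻¹' A₀, fC P α B (n + 1) ω ∂P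
      = ∫ ω in (fun ω (i : Fin n) => ω i) ⁻¹' A₀, fC P α B n ω ∂P := by
  classical
  set ν : Measure ℝ := P.map (fun ω : ℕ → 𝒴 × ℝ => (ω 0).2) with hν
  have hmZ : ∀ m : ℕ, Measurable (fun ω : ℕ → 𝒴 × ℝ => (ω m).2) :=
    fun m => measurable_snd.comp (measurable_pi_apply m)
  haveI : IsProbabilityMeasure ν := Measure.isProbabilityMeasure_map (hmZ 0).aemeasurable
  set T : (ℕ → 𝒴 × ℝ) → (Fin n → 𝒴 × ℝ) × 𝒴 := fun ω => ((fun i : Fin n => ω i), (ω n).1) with hT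
  set Z : (ℕ → 𝒴 × ℝ) → ℝ := fun ω => (ω n).2 with hZ
  have hmT : Measurable T := (measurable_R (𝒴 × ℝ) n).prodMk (measurable_fst.comp (measurable_pi_apply n))
  have hmZn : Measurable Z := hmZ n
  -- the integrand on the product space
  set F : ((Fin n → 𝒴 × ℝ) × 𝒴) → ℝ → ℝ := fun t z =>
    (aaF P α B t.1 + max z 0 * B.indicator (fun _ => (1 : ℝ)) t.2) / (ccF α t.1 + max z 0)
    with hF
  set G : (((Fin n → 𝒴 × ℝ) × 𝒴) × ℝ) → ℝ := fun q =>
    A₀.indicator (fun _ => (1 : ℝ)) q.1.1 * F q.1 q.2 with hG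
  have hmF : Measurable (fun q : ((Fin n → 𝒴 × ℝ) × 𝒴) × ℝ => F q.1 q.2) := by
    refine Measurable.div ?_ ?_
    · exact ((measurable_aaF hB).comp (measurable_fst.comp measurable_fst)).add
        ((measurable_snd.max measurable_const).mul
          ((measurable_const.indicator hB).comp (measurable_snd.comp measurable_fst)))
    · exact (measurable_ccF.comp (measurable_fst.comp measurable_fst)).add
        (measurable_snd.max measurable_const)
  have hmind : Measurable (fun q : ((Fin n → 𝒴 × ℝ) × 𝒴) × ℝ => A₀.indicator (fun _ => (1:ℝ)) q.1.1) :=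
    (measurable_const.indicator hA₀).comp (measurable_fst.comp measurable_fst)
  have hmG : Measurable G := hmind.mul hmF
  have hFmem : ∀ t z, F t z ∈ Set.Icc (0 : ℝ) 1 := by
    intro t z
    have hm : (0 : ℝ) ≤ max z 0 := le_max_right _ _
    have hc := ccF_pos (n := n) hα t.1
    have hden : 0 < ccF α t.1 + max z 0 := by linarith
    constructor
    · refine div_nonneg (add_nonneg (aaF_nonneg hα t.1)
        (mul_nonneg hm (indicator_nonneg' _ _))) hden.le
    · rw [div_le_one hden]
      have h1 := aaF_le_ccF (B := B) (P := P) hα t.1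
      have h2 : max z 0 * B.indicator (fun _ => (1 : ℝ)) t.2 ≤ max z 0 :=
        mul_le_of_le_one_right hm (indicator_le_one' _ _)
      linarith
  have hGb : ∀ q, |G q| ≤ 1 := by
    intro q
    rw [hG, abs_mul]
    have h1 := indicator_abs_le_one A₀ q.1.1
    have h2 : |F q.1 q.2| ≤ 1 := by
      rcases hFmem q.1 q.2 with ⟨h0, hle⟩
      rw [abs_of_nonneg h0]; exact hle
    calc |A₀.indicator (fun _ => (1:ℝ)) q.1.1| * |F q.1 q.2| ≤ 1 * 1 :=
      mul_le_mul h1 h2 (abs_nonneg _) zero_le_one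
    _ = 1 := by ring
  -- Step A: rewrite the LHS as an integral over `P` of `G ∘ (T, Z)`
  have hApre : MeasurableSet ((fun ω : ℕ → 𝒴 × ℝ => fun i : Fin n => ω i) ⁻¹' A₀) :=
    measurable_R (𝒴 × ℝ) n hA₀
  have stepA : ∫ ω in (fun ω : ℕ → 𝒴 × ℝ => fun i : Fin n => ω i) ⁻¹' A₀, fC P α B (n + 1) ω ∂P
      = ∫ ω, G (T ω, Z ω) ∂P := by
    rw [← integral_indicator hApre]
    refine integral_congr_ae (Filter.Eventually.of_forall fun ω => ?_)
    by_cases h : (fun i : Fin n => ω i) ∈ A₀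
    · rw [Set.indicator_of_mem (by exact h), hG]
      simp only [hT, hZ, hF, Set.indicator_of_mem h, one_mul]
      rw [fC_succ_eq]
    · rw [Set.indicator_of_notMem (by exact h), hG]
      simp only [hT, Set.indicator_of_notMem h, zero_mul]
  -- Step B/C/D: independence and Fubini
  have hTZindep : ProbabilityTheory.IndepFun T Z P := (hindep n).symm
  have hmap : P.map (fun ω => (T ω, Z ω)) = (P.map T).prod (P.map Z) :=
    (ProbabilityTheory.indepFun_iff_map_prod_eq_prod_map_map hmT.aemeasurable
      hmZn.aemeasurable).mp hTZindep
  haveI : IsProbabilityMeasure (P.map T) := Measure.isProbabilityMeasure_map hmT.aemeasurable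
  haveI : IsProbabilityMeasure (P.map Z) := Measure.isProbabilityMeasure_map hmZn.aemeasurable
  have hGint : Integrable G ((P.map T).prod (P.map Z)) := integrable_of_bdd hmG hGb
  have stepB : ∫ ω, G (T ω, Z ω) ∂P = ∫ t, ∫ z, G (t, z) ∂(P.map Z) ∂(P.map T) := by
    rw [← integral_prod _ hGint, ← hmap,
      integral_map (hmT.prodMk hmZn).aemeasurable hmG.aestronglyMeasurable]
  -- Step E: identify the law of `Z`
  have hZlaw : P.map Z = ν := hid n
  -- Step F: compute the inner integral
  have stepF : ∀ t : (Fin n → 𝒴 × ℝ) × 𝒴, ∫ z, G (t, z) ∂ν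
      = A₀.indicator (fun _ => (1 : ℝ)) t.1
        * (B.indicator (fun _ => (1 : ℝ)) t.2 * uu ν (aaF P α B t.1) (ccF α t.1)
          + (1 - B.indicator (fun _ => (1 : ℝ)) t.2) * ww ν (aaF P α B t.1) (ccF α t.1)) := by
    intro t
    have hc := ccF_pos (n := n) hα t.1
    rw [hG]
    simp only
    rw [integral_const_mul]
    congr 1
    by_cases h : t.2 ∈ B
    · simp only [Set.indicator_of_mem h, one_mul, sub_self, zero_mul, add_zero]
      rw [uu]
      refine integral_congr_ae (Filter.Eventually.of_forall fun z => ?_)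
      rw [hF]; simp only [Set.indicator_of_mem h, mul_one]
    · simp only [Set.indicator_of_notMem h, zero_mul, sub_zero, one_mul, zero_add]
      rw [ww]
      refine integral_congr_ae (Filter.Eventually.of_forall fun z => ?_)
      rw [hF]; simp only [Set.indicator_of_notMem h, mul_zero, add_zero]
  -- measurability of the averaged weights
  have hmuint : Measurable (fun p : (Fin n → 𝒴 × ℝ) × ℝ =>
      (aaF P α B p.1 + max p.2 0) / (ccF α p.1 + max p.2 0)) :=
    (((measurable_aaF hB).comp measurable_fst).add (measurable_snd.max measurable_const)).div
      ((measurable_ccF.comp measurable_fst).add (measurable_snd.max measurable_const))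
  have hmwint : Measurable (fun p : (Fin n → 𝒴 × ℝ) × ℝ =>
      aaF P α B p.1 / (ccF α p.1 + max p.2 0)) :=
    ((measurable_aaF hB).comp measurable_fst).div
      ((measurable_ccF.comp measurable_fst).add (measurable_snd.max measurable_const))
  have hmu : Measurable (fun v : Fin n → 𝒴 × ℝ => uu ν (aaF P α B v) (ccF α v)) :=
    (hmuint.stronglyMeasurable.integral_prod_right').measurable
  have hmw : Measurable (fun v : Fin n → 𝒴 × ℝ => ww ν (aaF P α B v) (ccF α v)) :=
    (hmwint.stronglyMeasurable.integral_prod_right').measurable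
  have huw01 : ∀ v : Fin n → 𝒴 × ℝ, uu ν (aaF P α B v) (ccF α v) ∈ Set.Icc (0:ℝ) 1
      ∧ ww ν (aaF P α B v) (ccF α v) ∈ Set.Icc (0:ℝ) 1 := by
    intro v
    have hc := ccF_pos (n := n) hα v
    have ha := aaF_nonneg (B := B) (P := P) hα v
    have hac := aaF_le_ccF (B := B) (P := P) hα v
    exact ⟨⟨uu_nonneg ha hc, uu_le_one ha hac hc⟩, ⟨ww_nonneg ha hc, ww_le_one ha hac hc⟩⟩
  -- the function appearing after integrating out `z`
  set φ : (Fin n → 𝒴 × ℝ) × 𝒴 → ℝ := fun t =>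
    A₀.indicator (fun _ => (1 : ℝ)) t.1
      * (B.indicator (fun _ => (1 : ℝ)) t.2 * uu ν (aaF P α B t.1) (ccF α t.1)
        + (1 - B.indicator (fun _ => (1 : ℝ)) t.2) * ww ν (aaF P α B t.1) (ccF α t.1)) with hφ
  have hmφ : Measurable φ := by
    refine Measurable.mul ?_ (Measurable.add ?_ ?_)
    · exact (measurable_const.indicator hA₀).comp measurable_fst
    · exact ((measurable_const.indicator hB).comp measurable_snd).mul (hmu.comp measurable_fst)
    · exact (measurable_const.sub ((measurable_const.indicator hB).comp measurable_snd)).mul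
        (hmw.comp measurable_fst)
  have stepG : ∫ t, φ t ∂(P.map T) = ∫ ω, φ (T ω) ∂P :=
    integral_map hmT.aemeasurable hmφ.aestronglyMeasurable
  -- combine steps A–G
  have main1 : ∫ ω in (fun ω : ℕ → 𝒴 × ℝ => fun i : Fin n => ω i) ⁻¹' A₀, fC P α B (n + 1) ω ∂P
      = ∫ ω, φ (T ω) ∂P := by
    rw [stepA, stepB, hZlaw]
    calc ∫ t, ∫ z, G (t, z) ∂ν ∂(P.map T) = ∫ t, φ t ∂(P.map T) :=
        integral_congr_ae (Filter.Eventually.of_forall fun t => stepF t)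
      _ = ∫ ω, φ (T ω) ∂P := stepG
  -- the two weight functions
  set g₁ : (Fin n → 𝒴 × ℝ) → ℝ := fun v =>
    A₀.indicator (fun _ => (1 : ℝ)) v * (uu ν (aaF P α B v) (ccF α v) - ww ν (aaF P α B v) (ccF α v))
    with hg₁
  set g₂ : (Fin n → 𝒴 × ℝ) → ℝ := fun v =>
    A₀.indicator (fun _ => (1 : ℝ)) v * ww ν (aaF P α B v) (ccF α v) with hg₂
  have hmg₁ : Measurable g₁ := (measurable_const.indicator hA₀).mul (hmu.sub hmw)
  have hmg₂ : Measurable g₂ := (measurable_const.indicator hA₀).mul hmw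
  have hg₁b : ∀ v, |g₁ v| ≤ 1 := by
    intro v
    rw [hg₁]
    simp only
    rw [abs_mul]
    obtain ⟨⟨hu0, hu1⟩, ⟨hw0, hw1⟩⟩ := huw01 v
    have h2 : |uu ν (aaF P α B v) (ccF α v) - ww ν (aaF P α B v) (ccF α v)| ≤ 1 := by
      rw [abs_le]; constructor <;> linarith
    calc |A₀.indicator (fun _ => (1:ℝ)) v| * |_| ≤ 1 * 1 :=
      mul_le_mul (indicator_abs_le_one _ _) h2 (abs_nonneg _) zero_le_one
    _ = 1 := by ring
  have hg₂b : ∀ v, |g₂ v| ≤ 1 := by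
    intro v
    rw [hg₂]
    simp only
    rw [abs_mul]
    obtain ⟨_, ⟨hw0, hw1⟩⟩ := huw01 v
    have h2 : |ww ν (aaF P α B v) (ccF α v)| ≤ 1 := by rw [abs_le]; constructor <;> linarith
    calc |A₀.indicator (fun _ => (1:ℝ)) v| * |_| ≤ 1 * 1 :=
      mul_le_mul (indicator_abs_le_one _ _) h2 (abs_nonneg _) zero_le_one
    _ = 1 := by ring
  -- split φ ∘ T
  have hint1 : Integrable (fun ω : ℕ → 𝒴 × ℝ =>
      g₁ (fun i : Fin n => ω i) * B.indicator (fun _ => (1 : ℝ)) ((ω n).1)) P := by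
    refine integrable_of_bdd (C := 1) ((hmg₁.comp (measurable_R (𝒴 × ℝ) n)).mul
      (measurable_indY hB n)) fun ω => ?_
    rw [abs_mul]
    calc |g₁ _| * |_| ≤ 1 * 1 :=
      mul_le_mul (hg₁b _) (indicator_abs_le_one _ _) (abs_nonneg _) zero_le_one
    _ = 1 := by ring
  have hint2 : Integrable (fun ω : ℕ → 𝒴 × ℝ => g₂ (fun i : Fin n => ω i)) P :=
    integrable_of_bdd (hmg₂.comp (measurable_R (𝒴 × ℝ) n)) (fun ω => hg₂b _)
  have stepH : ∫ ω, φ (T ω) ∂P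
      = (∫ ω, g₁ (fun i : Fin n => ω i) * B.indicator (fun _ => (1 : ℝ)) ((ω n).1) ∂P)
        + ∫ ω, g₂ (fun i : Fin n => ω i) ∂P := by
    rw [← integral_add hint1 hint2]
    refine integral_congr_ae (Filter.Eventually.of_forall fun ω => ?_)
    rw [hφ, hg₁, hg₂, hT]
    simp only
    ring
  -- apply the predictive representation to the first summand
  have hrep := rep P hα hB hpred n hmg₁ 1 hg₁b MeasurableSet.univ
  rw [Set.preimage_univ, Measure.restrict_univ] at hrep
  -- replace `fU` by `fC` a.e.
  have hae : (fun ω : ℕ → 𝒴 × ℝ => g₁ (fun i : Fin n => ω i) * fU P α B n ω)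
      =ᵐ[P] fun ω => g₁ (fun i : Fin n => ω i) * fC P α B n ω := by
    filter_upwards [hpos] with ω hω
    rw [fU_eq_fC hω]
  have hmfC : Measurable (fun ω : ℕ → 𝒴 × ℝ => fC P α B n ω) := by
    have : (fun ω : ℕ → 𝒴 × ℝ => fC P α B n ω)
        = fun ω => aaF P α B (fun i : Fin n => ω i) / ccF α (fun i : Fin n => ω i) := by
      funext ω; exact fC_eq ω
    rw [this]
    exact ((measurable_aaF hB).comp (measurable_R (𝒴 × ℝ) n)).div
      (measurable_ccF.comp (measurable_R (𝒴 × ℝ) n))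
  have hfC01 : ∀ ω : ℕ → 𝒴 × ℝ, fC P α B n ω ∈ Set.Icc (0:ℝ) 1 := by
    intro ω
    rw [fC_eq]
    have hc := ccF_pos (n := n) hα (fun i : Fin n => ω i)
    have ha := aaF_nonneg (B := B) (P := P) hα (fun i : Fin n => ω i)
    have hac := aaF_le_ccF (B := B) (P := P) hα (fun i : Fin n => ω i)
    exact ⟨div_nonneg ha hc.le, by rw [div_le_one hc]; exact hac⟩
  have hint3 : Integrable (fun ω : ℕ → 𝒴 × ℝ =>
      g₁ (fun i : Fin n => ω i) * fC P α B n ω) P := by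
    refine integrable_of_bdd (C := 1) ((hmg₁.comp (measurable_R (𝒴 × ℝ) n)).mul hmfC)
      fun ω => ?_
    rw [abs_mul]
    obtain ⟨h0, h1⟩ := hfC01 ω
    calc |g₁ _| * |fC P α B n ω| ≤ 1 * 1 :=
      mul_le_mul (hg₁b _) (by rw [abs_of_nonneg h0]; exact h1) (abs_nonneg _) zero_le_one
    _ = 1 := by ring
  -- final pointwise identity
  have final : ∫ ω, φ (T ω) ∂P
      = ∫ ω in (fun ω : ℕ → 𝒴 × ℝ => fun i : Fin n => ω i) ⁻¹' A₀, fC P α B n ω ∂P := by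
    rw [stepH, hrep, integral_congr_ae hae, ← integral_add hint3 hint2, ← integral_indicator hApre]
    refine integral_congr_ae (Filter.Eventually.of_forall fun ω => ?_)
    by_cases h : (fun i : Fin n => ω i) ∈ A₀
    · have hkey := key_id (ν := ν) (aaF_nonneg (B := B) (P := P) hα (fun i : Fin n => ω i))
        (ccF_pos (n := n) hα (fun i : Fin n => ω i))
      rw [hg₁, hg₂]
      simp only [Set.indicator_of_mem h, one_mul]
      rw [Set.indicator_of_mem (by exact h), fC_eq]
      exact hkey
    · rw [hg₁, hg₂]
      simp only [Set.indicator_of_notMem h, zero_mul]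
      rw [Set.indicator_of_notMem (by exact h)]
      ring
  rw [main1, final]

/-- One-step identity for the `Y`-marginal, in set-integral form. -/
lemma keyY {𝒴 : Type*} [MeasurableSpace 𝒴] (P : Measure (ℕ → 𝒴 × ℝ)) [IsProbabilityMeasure P]
    {α : ℝ} (hα : 0 < α) {B : Set 𝒴} (hB : MeasurableSet B)
    (hpos : ∀ᵐ ω ∂P, ∀ n, 0 < (ω n).2)
    (hindep : ∀ n : ℕ, ProbabilityTheory.Indep
      (MeasurableSpace.comap (fun ω => (ω n).2) inferInstance)
      (MeasurableSpace.comap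
        (fun ω => ((fun i : Fin n => ω i), (ω n).1)) inferInstance) P)
    (hid : ∀ n : ℕ, P.map (fun ω => (ω n).2) = P.map (fun ω => (ω 0).2))
    (hpred : ∀ B : Set 𝒴, MeasurableSet B → ∀ n : ℕ, 1 ≤ n →
      (P[fun ω => B.indicator (fun _ => (1 : ℝ)) ((ω n).1) | cylG (𝒴 × ℝ) n])
        =ᵐ[P] fun ω =>
          (α * (P {ω' | (ω' 0).1 ∈ B}).toReal
            + ∑ i ∈ Finset.range n, (ω i).2 * B.indicator (fun _ => (1 : ℝ)) ((ω i).1))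
          / (α + ∑ i ∈ Finset.range n, (ω i).2))
    (n : ℕ) {A₀ : Set (Fin n → 𝒴 × ℝ)} (hA₀ : MeasurableSet A₀) :
    ∫ ω in (fun ω (i : Fin n) => ω i) ⁻¹' A₀,
        B.indicator (fun _ => (1 : ℝ)) ((ω (n + 1)).1) ∂P
      = ∫ ω in (fun ω (i : Fin n) => ω i) ⁻¹' A₀,
          B.indicator (fun _ => (1 : ℝ)) ((ω n).1) ∂P := by
  classical
  set A₁ : Set (Fin (n + 1) → 𝒴 × ℝ) :=
    (fun v : Fin (n + 1) → 𝒴 × ℝ => fun i : Fin n => v (Fin.castLE (Nat.le_succ n) i)) ⁻¹' A₀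
    with hA₁
  have hA₁m : MeasurableSet A₁ :=
    (measurable_pi_lambda _ (fun i => measurable_pi_apply _)) hA₀
  have hpreeq : (fun ω : ℕ → 𝒴 × ℝ => fun i : Fin (n + 1) => ω i) ⁻¹' A₁
      = (fun ω : ℕ → 𝒴 × ℝ => fun i : Fin n => ω i) ⁻¹' A₀ := by
    ext ω
    simp only [Set.mem_preimage, hA₁]
    rfl
  have hApre : MeasurableSet ((fun ω : ℕ → 𝒴 × ℝ => fun i : Fin n => ω i) ⁻¹' A₀) :=
    measurable_R (𝒴 × ℝ) n hA₀
  have h1const : ∀ v : Fin (n + 1) → 𝒴 × ℝ, |(1 : ℝ)| ≤ 1 := fun _ => by norm_num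
  -- LHS via rep at level n+1
  have hrep1 := rep P hα hB hpred (n + 1) (g := fun _ => (1 : ℝ)) measurable_const 1
    (fun _ => by norm_num) hA₁m
  rw [hpreeq] at hrep1
  simp only [one_mul] at hrep1
  -- RHS via rep at level n
  have hrep2 := rep P hα hB hpred n (g := fun _ => (1 : ℝ)) measurable_const 1
    (fun _ => by norm_num) hA₀
  simp only [one_mul] at hrep2
  rw [hrep1, hrep2]
  have haeu : ∀ m : ℕ, (fun ω : ℕ → 𝒴 × ℝ => fU P α B m ω) =ᵐ[P] fun ω => fC P α B m ω := by
    intro m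
    filter_upwards [hpos] with ω hω
    exact fU_eq_fC hω
  calc ∫ ω in (fun ω (i : Fin n) => ω i) ⁻¹' A₀, fU P α B (n + 1) ω ∂P
      = ∫ ω in (fun ω (i : Fin n) => ω i) ⁻¹' A₀, fC P α B (n + 1) ω ∂P :=
        integral_congr_ae (ae_restrict_of_ae (haeu (n + 1)))
    _ = ∫ ω in (fun ω (i : Fin n) => ω i) ⁻¹' A₀, fC P α B n ω ∂P :=
        crux P hα hB hpos hindep hid hpred n hA₀
    _ = ∫ ω in (fun ω (i : Fin n) => ω i) ⁻¹' A₀, fU P α B n ω ∂P :=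
        (integral_congr_ae (ae_restrict_of_ae (haeu n))).symm

lemma setInt_ind {Ω : Type*} [MeasurableSpace Ω] (P : Measure Ω) [IsProbabilityMeasure P]
    {A s : Set Ω} (hA : MeasurableSet A) (hs : MeasurableSet s) :
    ∫ ω in A, s.indicator (fun _ => (1 : ℝ)) ω ∂P = (P (s ∩ A)).toReal := by
  rw [integral_indicator_const (1 : ℝ) hs, Measure.real, Measure.restrict_apply hs]
  simp

/-- Splitting off the independent weight coordinate. -/
lemma keyZ {𝒴 : Type*} [MeasurableSpace 𝒴] (P : Measure (ℕ → 𝒴 × ℝ)) [IsProbabilityMeasure P]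
    (hindep : ∀ n : ℕ, ProbabilityTheory.Indep
      (MeasurableSpace.comap (fun ω => (ω n).2) inferInstance)
      (MeasurableSpace.comap
        (fun ω => ((fun i : Fin n => ω i), (ω n).1)) inferInstance) P)
    (hid : ∀ n : ℕ, P.map (fun ω => (ω n).2) = P.map (fun ω => (ω 0).2))
    {n m : ℕ} (hnm : n ≤ m) {A₀ : Set (Fin n → 𝒴 × ℝ)} (hA₀ : MeasurableSet A₀)
    {B : Set 𝒴} (hB : MeasurableSet B) {C : Set ℝ} (hC : MeasurableSet C) :
    P (((fun ω (i : Fin n) => ω i) ⁻¹' A₀) ∩ ((fun ω : ℕ → 𝒴 × ℝ => ω m) ⁻¹' (B ×ˢ C)))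
      = (P.map (fun ω : ℕ → 𝒴 × ℝ => (ω 0).2)) C
        * P (((fun ω (i : Fin n) => ω i) ⁻¹' A₀) ∩ {ω : ℕ → 𝒴 × ℝ | (ω m).1 ∈ B}) := by
  classical
  set Z : (ℕ → 𝒴 × ℝ) → ℝ := fun ω => (ω m).2 with hZ
  set T : (ℕ → 𝒴 × ℝ) → (Fin m → 𝒴 × ℝ) × 𝒴 := fun ω => ((fun i : Fin m => ω i), (ω m).1) with hT
  have hZT : ProbabilityTheory.IndepFun Z T P := hindep m
  set restr : (Fin m → 𝒴 × ℝ) → (Fin n → 𝒴 × ℝ) :=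
    fun v i => v (Fin.castLE hnm i) with hrestr
  have hmrestr : Measurable restr := measurable_pi_lambda _ (fun i => measurable_pi_apply _)
  set D : Set ((Fin m → 𝒴 × ℝ) × 𝒴) := ((restr ∘ Prod.fst) ⁻¹' A₀) ∩ (Prod.snd ⁻¹' B) with hD
  have hDm : MeasurableSet D :=
    ((hmrestr.comp measurable_fst) hA₀).inter (measurable_snd hB)
  have hseteq1 : ((fun ω (i : Fin n) => ω i) ⁻¹' A₀) ∩ ((fun ω : ℕ → 𝒴 × ℝ => ω m) ⁻¹' (B ×ˢ C))
      = Z ⁻¹' C ∩ T ⁻¹' D := by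
    ext ω
    simp only [Set.mem_inter_iff, Set.mem_preimage, Set.mem_prod, hZ, hT, hD,
      Function.comp_apply, hrestr, Set.mem_setOf_eq]
    constructor
    · rintro ⟨h1, h2, h3⟩
      refine ⟨h3, ?_, h2⟩
      convert h1 using 2
      rfl
    · rintro ⟨h3, h1, h2⟩
      refine ⟨?_, h2, h3⟩
      convert h1 using 2
      rfl
  have hseteq2 : ((fun ω (i : Fin n) => ω i) ⁻¹' A₀) ∩ {ω : ℕ → 𝒴 × ℝ | (ω m).1 ∈ B}
      = T ⁻¹' D := by
    ext ω
    simp only [Set.mem_inter_iff, Set.mem_preimage, hT, hD, Function.comp_apply, hrestr,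
      Set.mem_setOf_eq]
    constructor
    · rintro ⟨h1, h2⟩
      refine ⟨?_, h2⟩
      convert h1 using 2
      rfl
    · rintro ⟨h1, h2⟩
      refine ⟨?_, h2⟩
      convert h1 using 2
      rfl
  rw [hseteq1, hseteq2, hZT.measure_inter_preimage_eq_mul C D hC hDm]
  congr 1
  rw [← hid m,
    Measure.map_apply (f := fun ω : ℕ → 𝒴 × ℝ => (ω m).2) ((measurable_pi_apply m).snd) hC]

lemma ind_comp {Ω γ : Type*} (f : Ω → γ) (B : Set γ) :
    (fun ω => B.indicator (fun _ => (1 : ℝ)) (f ω)) = (f ⁻¹' B).indicator (fun _ => (1 : ℝ)) :=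
  funext fun ω => by by_cases h : f ω ∈ B <;> simp [Set.indicator_apply, h]

lemma setEq {𝒴 : Type*} [MeasurableSpace 𝒴] (P : Measure (ℕ → 𝒴 × ℝ)) [IsProbabilityMeasure P]
    {α : ℝ} (hα : 0 < α)
    (hpos : ∀ᵐ ω ∂P, ∀ n, 0 < (ω n).2)
    (hindep : ∀ n : ℕ, ProbabilityTheory.Indep
      (MeasurableSpace.comap (fun ω => (ω n).2) inferInstance)
      (MeasurableSpace.comap
        (fun ω => ((fun i : Fin n => ω i), (ω n).1)) inferInstance) P)
    (hid : ∀ n : ℕ, P.map (fun ω => (ω n).2) = P.map (fun ω => (ω 0).2))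
    (hpred : ∀ B : Set 𝒴, MeasurableSet B → ∀ n : ℕ, 1 ≤ n →
      (P[fun ω => B.indicator (fun _ => (1 : ℝ)) ((ω n).1) | cylG (𝒴 × ℝ) n])
        =ᵐ[P] fun ω =>
          (α * (P {ω' | (ω' 0).1 ∈ B}).toReal
            + ∑ i ∈ Finset.range n, (ω i).2 * B.indicator (fun _ => (1 : ℝ)) ((ω i).1))
          / (α + ∑ i ∈ Finset.range n, (ω i).2))
    (n : ℕ) {A₀ : Set (Fin n → 𝒴 × ℝ)} (hA₀ : MeasurableSet A₀)
    {Bs : Set (𝒴 × ℝ)} (hBs : MeasurableSet Bs) :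
    P (((fun ω (i : Fin n) => ω i) ⁻¹' A₀) ∩ ((fun ω : ℕ → 𝒴 × ℝ => ω (n + 1)) ⁻¹' Bs))
      = P (((fun ω (i : Fin n) => ω i) ⁻¹' A₀) ∩ ((fun ω : ℕ → 𝒴 × ℝ => ω n) ⁻¹' Bs)) := by
  classical
  set A : Set (ℕ → 𝒴 × ℝ) := (fun ω (i : Fin n) => ω i) ⁻¹' A₀ with hA
  have hAm : MeasurableSet A := measurable_R (𝒴 × ℝ) n hA₀
  -- the measure identity for the Y-part
  have hYmeas : ∀ {B : Set 𝒴}, MeasurableSet B →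
      P (A ∩ {ω : ℕ → 𝒴 × ℝ | (ω (n + 1)).1 ∈ B}) = P (A ∩ {ω : ℕ → 𝒴 × ℝ | (ω n).1 ∈ B}) := by
    intro B hB
    have h := keyY P hα hB hpos hindep hid hpred n hA₀
    have e1 : (fun ω : ℕ → 𝒴 × ℝ => B.indicator (fun _ => (1 : ℝ)) ((ω (n + 1)).1))
        = ((fun ω : ℕ → 𝒴 × ℝ => (ω (n + 1)).1) ⁻¹' B).indicator (fun _ => (1 : ℝ)) :=
      ind_comp _ B
    have e2 : (fun ω : ℕ → 𝒴 × ℝ => B.indicator (fun _ => (1 : ℝ)) ((ω n).1))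
        = ((fun ω : ℕ → 𝒴 × ℝ => (ω n).1) ⁻¹' B).indicator (fun _ => (1 : ℝ)) :=
      ind_comp _ B
    rw [e1, e2] at h
    rw [setInt_ind P hAm ((measurable_pi_apply (n+1)).fst hB),
      setInt_ind P hAm ((measurable_pi_apply n).fst hB)] at h
    have := (ENNReal.toReal_eq_toReal_iff' (measure_ne_top P _) (measure_ne_top P _)).mp h
    rw [Set.inter_comm A, Set.inter_comm A]
    exact this
  -- compare the two image measures
  set μ₁ : Measure (𝒴 × ℝ) := (P.restrict A).map (fun ω => ω (n + 1)) with hμ₁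
  set μ₂ : Measure (𝒴 × ℝ) := (P.restrict A).map (fun ω => ω n) with hμ₂
  haveI : IsFiniteMeasure (P.restrict A) := inferInstance
  haveI : IsFiniteMeasure μ₁ := Measure.isFiniteMeasure_map _ _
  haveI : IsFiniteMeasure μ₂ := Measure.isFiniteMeasure_map _ _
  have happ : ∀ (m : ℕ) {s : Set (𝒴 × ℝ)}, MeasurableSet s →
      ((P.restrict A).map (fun ω => ω m)) s = P (A ∩ ((fun ω : ℕ → 𝒴 × ℝ => ω m) ⁻¹' s)) := by
    intro m s hs
    rw [Measure.map_apply (measurable_pi_apply m) hs,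
      Measure.restrict_apply (measurable_pi_apply m hs), Set.inter_comm]
  have hext : μ₁ = μ₂ := by
    refine ext_of_generate_finite _ generateFrom_prod.symm isPiSystem_prod ?_ ?_
    · rintro s ⟨B, hB, C, hC, rfl⟩
      simp only [Set.mem_setOf_eq] at hB hC
      rw [hμ₁, hμ₂, happ (n + 1) (hB.prod hC), happ n (hB.prod hC),
        keyZ P hindep hid (Nat.le_succ n) hA₀ hB hC, keyZ P hindep hid (le_refl n) hA₀ hB hC,
        hYmeas hB]
    · rw [hμ₁, hμ₂, happ (n + 1) MeasurableSet.univ, happ n MeasurableSet.univ]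
      simp
  rw [← happ (n + 1) hBs, ← happ n hBs, ← hμ₁, ← hμ₂, hext]

theorem stmt14' {𝒴 : Type*} [MeasurableSpace 𝒴] (P : Measure (ℕ → 𝒴 × ℝ))
    [IsProbabilityMeasure P] (α : ℝ) (hα : 0 < α)
    (hpos : ∀ᵐ ω ∂P, ∀ n, 0 < (ω n).2)
    (hindep : ∀ n : ℕ, ProbabilityTheory.Indep
      (MeasurableSpace.comap (fun ω => (ω n).2) inferInstance)
      (MeasurableSpace.comap
        (fun ω => ((fun i : Fin n => ω i), (ω n).1)) inferInstance) P)
    (hid : ∀ n : ℕ, P.map (fun ω => (ω n).2) = P.map (fun ω => (ω 0).2))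
    (hpred : ∀ B : Set 𝒴, MeasurableSet B → ∀ n : ℕ, 1 ≤ n →
      (P[fun ω => B.indicator (fun _ => (1 : ℝ)) ((ω n).1) | cylG (𝒴 × ℝ) n])
        =ᵐ[P] fun ω =>
          (α * (P {ω' | (ω' 0).1 ∈ B}).toReal
            + ∑ i ∈ Finset.range n, (ω i).2 * B.indicator (fun _ => (1 : ℝ)) ((ω i).1))
          / (α + ∑ i ∈ Finset.range n, (ω i).2)) :
    CID P := by
  intro Bs hBs n k hnk
  have hint : ∀ m : ℕ,
      Integrable (fun ω : ℕ → 𝒴 × ℝ => Bs.indicator (fun _ => (1 : ℝ)) (ω m)) P :=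
    fun m => integrable_of_bdd ((measurable_const.indicator hBs).comp (measurable_pi_apply m))
      (fun ω => indicator_abs_le_one _ _)
  have onestep : ∀ m : ℕ,
      (P[fun ω => Bs.indicator (fun _ => (1 : ℝ)) (ω (m + 1)) | cylG (𝒴 × ℝ) m])
        =ᵐ[P] (P[fun ω => Bs.indicator (fun _ => (1 : ℝ)) (ω m) | cylG (𝒴 × ℝ) m]) := by
    intro m
    have hm := cylG_le (𝒴 × ℝ) m
    haveI : SigmaFinite (P.trim hm) := inferInstance
    refine ae_eq_of_forall_setIntegral_eq_of_sigmaFinite' hm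
      (fun s _ _ => integrable_condExp.integrableOn)
      (fun s _ _ => integrable_condExp.integrableOn) ?_
      (StronglyMeasurable.aestronglyMeasurable stronglyMeasurable_condExp)
      (StronglyMeasurable.aestronglyMeasurable stronglyMeasurable_condExp)
    intro s hs _
    rw [setIntegral_condExp hm (hint (m + 1)) hs, setIntegral_condExp hm (hint m) hs]
    obtain ⟨A₀, hA₀, rfl⟩ := hs
    rw [ind_comp (fun ω : ℕ → 𝒴 × ℝ => ω (m + 1)) Bs, ind_comp (fun ω : ℕ → 𝒴 × ℝ => ω m) Bs,
      setInt_ind P (measurable_R _ m hA₀) (measurable_pi_apply (m + 1) hBs),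
      setInt_ind P (measurable_R _ m hA₀) (measurable_pi_apply m hBs)]
    congr 1
    calc P (((fun ω : ℕ → 𝒴 × ℝ => ω (m + 1)) ⁻¹' Bs) ∩ ((fun ω (i : Fin m) => ω i) ⁻¹' A₀))
        = P (((fun ω (i : Fin m) => ω i) ⁻¹' A₀) ∩ ((fun ω : ℕ → 𝒴 × ℝ => ω (m + 1)) ⁻¹' Bs)) := by
          rw [Set.inter_comm]
      _ = P (((fun ω (i : Fin m) => ω i) ⁻¹' A₀) ∩ ((fun ω : ℕ → 𝒴 × ℝ => ω m) ⁻¹' Bs)) :=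
          setEq P hα hpos hindep hid hpred m hA₀ hBs
      _ = P (((fun ω : ℕ → 𝒴 × ℝ => ω m) ⁻¹' Bs) ∩ ((fun ω (i : Fin m) => ω i) ⁻¹' A₀)) := by
          rw [Set.inter_comm]
  induction k, hnk using Nat.le_induction with
  | base => exact onestep n
  | succ k hk IH =>
    have hmn : cylG (𝒴 × ℝ) n ≤ cylG (𝒴 × ℝ) k := cylG_mono _ (by omega)
    have hmk := cylG_le (𝒴 × ℝ) k
    haveI : SigmaFinite (P.trim hmk) := inferInstance
    have t1 := (condExp_condExp_of_le (μ := P) hmn hmk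
      (f := fun ω => Bs.indicator (fun _ => (1 : ℝ)) (ω (k + 1)))).symm
    have t2 : (P[P[fun ω => Bs.indicator (fun _ => (1 : ℝ)) (ω (k + 1)) | cylG (𝒴 × ℝ) k]
        | cylG (𝒴 × ℝ) n])
        =ᵐ[P] (P[P[fun ω => Bs.indicator (fun _ => (1 : ℝ)) (ω k) | cylG (𝒴 × ℝ) k]
        | cylG (𝒴 × ℝ) n]) := condExp_congr_ae (onestep k)
    have t3 := condExp_condExp_of_le (μ := P) hmn hmk
      (f := fun ω => Bs.indicator (fun _ => (1 : ℝ)) (ω k))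
    exact t1.trans (t2.trans (t3.trans IH))

end Aux

/-- Lemma 6: the generalized Pólya urn sequence `X_n = (Y_n, Z_n)` is c.i.d.
Here `S = 𝒴 × ℝ`, with the weights `Z_n` a.s. in `(0,∞)`. -/
theorem stmt14 {𝒴 : Type*} [MeasurableSpace 𝒴] (P : Measure (ℕ → 𝒴 × ℝ))
    [IsProbabilityMeasure P] (α : ℝ) (hα : 0 < α)
    (hpos : ∀ᵐ ω ∂P, ∀ n, 0 < (ω n).2)
    -- `Z_{n+1}` is independent of `(X_1, Z_1, …, X_n, Z_n, Y_{n+1})` …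
    (hindep : ∀ n : ℕ, ProbabilityTheory.Indep
      (MeasurableSpace.comap (fun ω => (ω n).2) inferInstance)
      (MeasurableSpace.comap
        (fun ω => ((fun i : Fin n => ω i), (ω n).1)) inferInstance) P)
    -- … and has the same law as `Z_1`:
    (hid : ∀ n : ℕ, P.map (fun ω => (ω n).2) = P.map (fun ω => (ω 0).2))
    -- predictive distributions (4):
    (hpred : ∀ B : Set 𝒴, MeasurableSet B → ∀ n : ℕ, 1 ≤ n →
      (P[fun ω => B.indicator (fun _ => (1 : ℝ)) ((ω n).1) | cylG (𝒴 × ℝ) n])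
        =ᵐ[P] fun ω =>
          (α * (P {ω' | (ω' 0).1 ∈ B}).toReal
            + ∑ i ∈ Finset.range n, (ω i).2 * B.indicator (fun _ => (1 : ℝ)) ((ω i).1))
          / (α + ∑ i ∈ Finset.range n, (ω i).2)) :
    CID P :=
  stmt14' P α hα hpos hindep hid hpred
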